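/- For all integers d ≥ 1, r ≥ 1 and 0 ≤ ℓ ≤ d: if r = 1 and 0 ≤ ℓ < d, then the degree of A_{d,ℓ}^{(r)} is d−1; otherwise (i.e. if r ≥ 2, or r = 1 and ℓ = d), the degree of A_{d,ℓ}^{(r)} is d. (Corollary 5.7) -/

import Mathlib

open Polynomial PowerSeries Finset fwdDiff

/-- `A` is the `r`-colored `ℓ`-Eulerian polynomial `A_{d,ℓ}^{(r)}`, i.e. the polynomial
satisfying the formal power series identity
`A = (1 - x)^{d+1} * ∑_{t ≥ 0} (r t)^ℓ (r t + 1)^{d - ℓ} x^t`. -/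
def IsColoredEulerian (d r ℓ : ℕ) (A : Polynomial ℝ) : Prop :=
  (A : PowerSeries ℝ) =
    (1 - PowerSeries.X) ^ (d + 1) *
      PowerSeries.mk fun t : ℕ => ((r : ℝ) * t) ^ ℓ * ((r : ℝ) * t + 1) ^ (d - ℓ)

/-- Corollary 5.7: for `d ≥ 1`, `r ≥ 1` and `0 ≤ ℓ ≤ d`, the degree of `A_{d,ℓ}^{(r)}`
is `d - 1` if `r = 1` and `ℓ < d`, and is `d` otherwise (i.e. if `r ≥ 2`, or `r = 1`
and `ℓ = d`). -/

lemma comp_sub_natDegree (P : ℝ[X]) (n : ℕ) (h : P.natDegree ≤ n + 1) :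
    (P.comp (Polynomial.X + Polynomial.C 1) - P).natDegree ≤ n := by
  by_cases h0 : P.natDegree = 0
  · obtain ⟨c, rfl⟩ := Polynomial.natDegree_eq_zero.mp h0
    simp
  by_cases hQ : P.comp (Polynomial.X + Polynomial.C 1) - P = 0
  · rw [hQ]; simp
  have hP0 : P ≠ 0 := by rintro rfl; simp at h0
  have hdc : (P.comp (Polynomial.X + Polynomial.C 1)).natDegree = P.natDegree := by
    rw [Polynomial.natDegree_comp, Polynomial.natDegree_X_add_C, mul_one]
  have hlc : (P.comp (Polynomial.X + Polynomial.C 1)).leadingCoeff = P.leadingCoeff := by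
    rw [Polynomial.leadingCoeff_comp (by rw [Polynomial.natDegree_X_add_C]; exact one_ne_zero)]
    rw [Polynomial.leadingCoeff_X_add_C, one_pow, mul_one]
  have hc0 : P.comp (Polynomial.X + Polynomial.C 1) ≠ 0 :=
    Polynomial.comp_X_add_C_ne_zero_iff.mpr hP0
  have hdeg : (P.comp (Polynomial.X + Polynomial.C 1) - P).degree
      < (P.comp (Polynomial.X + Polynomial.C 1)).degree := by
    apply Polynomial.degree_sub_lt _ hc0 hlc
    rw [Polynomial.degree_eq_natDegree hc0, Polynomial.degree_eq_natDegree hP0, hdc]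
  have := Polynomial.natDegree_lt_natDegree hQ hdeg
  omega

lemma fwdDiff_eval (P : ℝ[X]) :
    Δ_[(1:ℝ)] (fun y : ℝ => P.eval y)
      = fun y : ℝ => (P.comp (Polynomial.X + Polynomial.C 1) - P).eval y := by
  funext y
  simp [fwdDiff, Polynomial.eval_comp]

lemma iter_fwdDiff_eval_zero : ∀ (n : ℕ) (P : ℝ[X]), P.natDegree ≤ n →
    (Δ_[(1:ℝ)])^[n+1] (fun y : ℝ => P.eval y) = fun _ => 0 := by
  intro n
  induction n with
  | zero =>
    intro P hP
    obtain ⟨c, rfl⟩ := Polynomial.natDegree_eq_zero.mp (Nat.le_zero.mp hP)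
    funext y
    simp [fwdDiff]
  | succ n IH =>
    intro P hP
    rw [Function.iterate_succ_apply, fwdDiff_eval]
    exact IH _ (comp_sub_natDegree P n hP)

lemma altsum (d : ℕ) (P : ℝ[X]) (hP : P.natDegree ≤ d) (x : ℝ) :
    ∑ k ∈ range (d+2), (-1:ℝ)^k * ((d+1).choose k) * P.eval (x - k) = 0 := by
  have h0 := fwdDiff_iter_eq_sum_shift (1:ℝ) (fun y : ℝ => P.eval y) (d+1) (x - (d+1))
  rw [iter_fwdDiff_eval_zero d P hP] at h0
  have h1 : (0:ℝ) = ∑ k ∈ range (d+2),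
      ((-1:ℤ)^(d+1-k) * ((d+1).choose k) : ℤ) • P.eval (x - (d+1) + k) := by
    simpa using h0
  rw [← Finset.sum_range_reflect]
  rw [h1]
  apply Finset.sum_congr rfl
  intro k hk
  rw [Finset.mem_range] at hk
  have hk' : k ≤ d + 1 := by omega
  have e1 : (d + 2 - 1 - k) = d + 1 - k := by omega
  rw [e1]
  have e2 : ((d+1).choose (d+1-k)) = (d+1).choose k := Nat.choose_symm hk'
  rw [e2]
  have e3 : x - (d+1) + k = x - ((d+1-k : ℕ) : ℝ) := by
    have : ((d+1-k : ℕ) : ℝ) = (d+1 : ℝ) - k := by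
      push_cast [Nat.cast_sub hk']
      ring
    rw [this]; ring
  rw [e3, zsmul_eq_mul]
  push_cast
  ring

lemma coeff_poly_one_sub_X_pow (m n : ℕ) :
    ((1 - Polynomial.X : ℝ[X])^m).coeff n = (-1:ℝ)^n * m.choose n := by
  have h : (1 - Polynomial.X : ℝ[X])^m
      = ∑ k ∈ range (m+1), ((-1:ℝ)^k * (m.choose k : ℝ)) • Polynomial.X^k := by
    have h0 := (Commute.all (-Polynomial.X : ℝ[X]) 1).add_pow m
    simp only [one_pow, mul_one] at h0
    rw [neg_add_eq_sub] at h0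
    rw [h0]
    apply Finset.sum_congr rfl
    intro k _
    rw [Polynomial.smul_eq_C_mul, neg_pow, map_mul, map_pow, map_neg, map_one, map_natCast]
    ring
  rw [h, Polynomial.finset_sum_coeff]
  simp only [Polynomial.coeff_smul, Polynomial.coeff_X_pow, smul_eq_mul, mul_ite, mul_one, mul_zero]
  by_cases hn : n < m + 1
  · rw [Finset.sum_ite_eq (range (m+1)) n]
    simp [Finset.mem_range.mpr hn, mul_comm]
  · rw [Finset.sum_ite_eq (range (m+1)) n]
    have : m.choose n = 0 := Nat.choose_eq_zero_of_lt (by omega)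
    simp [hn, this]

lemma coeff_ps_one_sub_X_pow (m n : ℕ) :
    (PowerSeries.coeff n) ((1 - PowerSeries.X)^m) = (-1:ℝ)^n * m.choose n := by
  have hc : ((1 - Polynomial.X : ℝ[X]) : PowerSeries ℝ) = 1 - PowerSeries.X := by
    rw [← Polynomial.coe_one, ← Polynomial.coe_X]
    exact map_sub (Polynomial.coeToPowerSeries.ringHom (R := ℝ)) 1 Polynomial.X
  rw [← hc, ← Polynomial.coe_pow, Polynomial.coeff_coe, coeff_poly_one_sub_X_pow]

noncomputable def EulP (d r ℓ : ℕ) : ℝ[X] :=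
  (Polynomial.C (r:ℝ) * Polynomial.X)^ℓ * (Polynomial.C (r:ℝ) * Polynomial.X + 1)^(d-ℓ)

lemma EulP_eval (d r ℓ : ℕ) (y : ℝ) :
    (EulP d r ℓ).eval y = ((r:ℝ) * y)^ℓ * ((r:ℝ) * y + 1)^(d-ℓ) := by
  simp [EulP]

lemma EulP_natDegree (d r ℓ : ℕ) (hℓ : ℓ ≤ d) : (EulP d r ℓ).natDegree ≤ d := by
  apply le_trans (Polynomial.natDegree_mul_le)
  have h1 : (Polynomial.C (r:ℝ) * Polynomial.X : ℝ[X]).natDegree ≤ 1 := by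
    apply le_trans (Polynomial.natDegree_mul_le)
    simp
  have h2 : (Polynomial.C (r:ℝ) * Polynomial.X + 1 : ℝ[X]).natDegree ≤ 1 := by
    apply le_trans (Polynomial.natDegree_add_le _ _)
    rw [Polynomial.natDegree_one]
    exact max_le h1 (Nat.zero_le 1)
  calc ((Polynomial.C (r:ℝ) * Polynomial.X)^ℓ).natDegree
        + ((Polynomial.C (r:ℝ) * Polynomial.X + 1)^(d-ℓ)).natDegree
      ≤ ℓ * 1 + (d-ℓ) * 1 := by
        gcongr
        · exact le_trans (Polynomial.natDegree_pow_le) (by nlinarith)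
        · exact le_trans (Polynomial.natDegree_pow_le) (by nlinarith)
    _ ≤ d := by omega

lemma coeffA (d r ℓ : ℕ) (A : ℝ[X]) (hA : IsColoredEulerian d r ℓ A) (n : ℕ) :
    A.coeff n = ∑ k ∈ range (n+1),
      (-1:ℝ)^k * ((d+1).choose k) * (EulP d r ℓ).eval ((n:ℝ) - k) := by
  rw [← Polynomial.coeff_coe, hA, PowerSeries.coeff_mul]
  rw [Finset.Nat.sum_antidiagonal_eq_sum_range_succ
    (fun i j => (PowerSeries.coeff i) ((1 - PowerSeries.X)^(d+1)) *
      (PowerSeries.coeff j) (PowerSeries.mk fun t : ℕ =>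
        ((r : ℝ) * t) ^ ℓ * ((r : ℝ) * t + 1) ^ (d - ℓ)))]
  apply Finset.sum_congr rfl
  intro k hk
  rw [Finset.mem_range] at hk
  rw [coeff_ps_one_sub_X_pow, PowerSeries.coeff_mk, EulP_eval]
  have : (((n - k : ℕ)) : ℝ) = (n:ℝ) - k := by
    rw [Nat.cast_sub (by omega)]
  rw [this]

section main
variable (d r ℓ : ℕ) (A : ℝ[X]) (hA : IsColoredEulerian d r ℓ A) (hℓ : ℓ ≤ d)

include hA hℓ in
lemma coeff_high (n : ℕ) (hn : d + 1 ≤ n) : A.coeff n = 0 := by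
  rw [coeffA d r ℓ A hA n]
  rw [← altsum d (EulP d r ℓ) (EulP_natDegree d r ℓ hℓ) (n:ℝ)]
  apply (Finset.sum_subset (Finset.range_subset_range.mpr (by omega)) _).symm
  intro k _ hk
  rw [Finset.mem_range, not_lt] at hk
  have : (d+1).choose k = 0 := Nat.choose_eq_zero_of_lt (by omega)
  simp [this]

include hA hℓ in
lemma coeff_top : A.coeff d = (-1:ℝ)^d * (EulP d r ℓ).eval (-1) := by
  have h0 := altsum d (EulP d r ℓ) (EulP_natDegree d r ℓ hℓ) (d:ℝ)
  rw [Finset.sum_range_succ] at h0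
  have e1 : ((d:ℝ) - (d+1:ℕ)) = -1 := by push_cast; ring
  rw [e1, Nat.choose_self] at h0
  have h2 : (-1:ℝ)^(d+1) = -(-1:ℝ)^d := by rw [pow_succ]; ring
  rw [h2] at h0
  rw [coeffA d r ℓ A hA d]
  push_cast at h0 ⊢
  linarith

include hA hℓ in
lemma coeff_subtop (e : ℕ) (hde : d = e + 1) :
    A.coeff e = (-1:ℝ)^e * ((e:ℝ)+2) * (EulP d r ℓ).eval (-1)
      - (-1:ℝ)^e * (EulP d r ℓ).eval (-2) := by
  subst hde
  have h0 := altsum (e+1) (EulP (e+1) r ℓ) (EulP_natDegree (e+1) r ℓ hℓ) (e:ℝ)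
  rw [Finset.sum_range_succ, Finset.sum_range_succ] at h0
  have e1 : ((e:ℝ) - ((e+1)+1:ℕ)) = -2 := by push_cast; ring
  have e2 : ((e:ℝ) - ((e+1):ℕ)) = -1 := by push_cast; ring
  rw [e1, e2, Nat.choose_self, Nat.choose_succ_self_right] at h0
  rw [coeffA (e+1) r ℓ A hA e]
  have h2 : (-1:ℝ)^(e+1) = -(-1:ℝ)^e := by rw [pow_succ]; ring
  have h3 : (-1:ℝ)^(e+1+1) = (-1:ℝ)^e := by rw [pow_succ, pow_succ]; ring
  rw [h2, h3] at h0
  have h4 : (((e+1)+1 : ℕ) : ℝ) = (e:ℝ) + 2 := by push_cast; ring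
  rw [h4] at h0
  push_cast at h0 ⊢
  linarith

end main

theorem colored_eulerian_degree (d r ℓ : ℕ) (hd : 1 ≤ d) (hr : 1 ≤ r) (hℓ : ℓ ≤ d)
    (A : Polynomial ℝ) (hA : IsColoredEulerian d r ℓ A) :
    (r = 1 ∧ ℓ < d → A.natDegree = d - 1) ∧
      (¬(r = 1 ∧ ℓ < d) → A.natDegree = d) := by
  obtain ⟨e, rfl⟩ : ∃ e, d = e + 1 := ⟨d - 1, by omega⟩
  constructor
  · rintro ⟨rfl, hl⟩
    -- r = 1, ℓ < e + 1
    have hev1 : (EulP (e+1) 1 ℓ).eval (-1) = 0 := by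
      rw [EulP_eval]
      have : (e + 1 - ℓ) ≠ 0 := by omega
      simp [this, zero_pow]
    have hct : A.coeff (e+1) = 0 := by
      rw [coeff_top (e+1) 1 ℓ A hA hℓ, hev1, mul_zero]
    have hcs : A.coeff e = (2:ℝ)^ℓ := by
      rw [coeff_subtop (e+1) 1 ℓ A hA hℓ e rfl, hev1]
      rw [EulP_eval]
      norm_num
      have h3 : (-2:ℝ)^ℓ = (-1:ℝ)^ℓ * 2^ℓ := by
        rw [neg_pow]
      rw [h3]
      have h4 : (-1:ℝ)^e * ((-1:ℝ)^ℓ * 2^ℓ * (-1:ℝ)^(e+1-ℓ)) = -(2:ℝ)^ℓ := by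
        have : (-1:ℝ)^e * (-1:ℝ)^ℓ * (-1:ℝ)^(e+1-ℓ) = (-1:ℝ)^(e + ℓ + (e+1-ℓ)) := by
          rw [pow_add, pow_add]
        have h5 : e + ℓ + (e+1-ℓ) = 2*e + 1 := by omega
        have h6 : (-1:ℝ)^(2*e+1) = -1 := Odd.neg_one_pow ⟨e, by ring⟩
        rw [h5, h6] at this
        linear_combination (2:ℝ)^ℓ * this
      nlinarith [h4]
    have hne : A.coeff e ≠ 0 := by rw [hcs]; positivity
    have hle : A.natDegree ≤ e := by
      rw [Polynomial.natDegree_le_iff_coeff_eq_zero]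
      intro m hm
      rcases Nat.lt_or_ge m (e+2) with h | h
      · have : m = e + 1 := by omega
        rw [this]; exact hct
      · exact coeff_high (e+1) 1 ℓ A hA hℓ m (by omega)
    have hge : e ≤ A.natDegree := Polynomial.le_natDegree_of_ne_zero hne
    omega
  · intro hcase
    have hne : A.coeff (e+1) ≠ 0 := by
      rw [coeff_top (e+1) r ℓ A hA hℓ]
      apply mul_ne_zero (by positivity)
      rw [EulP_eval]
      apply mul_ne_zero
      · apply pow_ne_zero
        intro h
        have : (r:ℝ) = 0 := by linarith [neg_eq_zero.mp (by linarith [h] : -((r:ℝ)) = 0)]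
        have : r = 0 := Nat.cast_eq_zero.mp this
        omega
      · rcases Nat.lt_or_ge 1 r with h2 | h2
        · apply pow_ne_zero
          have : (2:ℝ) ≤ (r:ℝ) := by exact_mod_cast h2
          intro h; nlinarith
        · -- r = 1, so ℓ = e + 1
          have hr1 : r = 1 := by omega
          have hle : ℓ = e + 1 := by
            rcases Nat.lt_or_ge ℓ (e+1) with h3 | h3
            · exact absurd ⟨hr1, h3⟩ hcase
            · omega
          rw [hle]
          simp
    have hle : A.natDegree ≤ e + 1 := by
      rw [Polynomial.natDegree_le_iff_coeff_eq_zero]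
      intro m hm
      exact coeff_high (e+1) r ℓ A hA hℓ m (by omega)
    have hge : e + 1 ≤ A.natDegree := Polynomial.le_natDegree_of_ne_zero hne
    omega
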